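/- For every integer m ≥ 2 there exists a finite set S of unit m-gons in Euclidean ℝ^d such that the hypergraph H(S) on vertex set ℝ^d, whose edges are all subsets of ℝ^d congruent in ℝ^d to some element of S, is equivalent to the Euclidean unit distance graph (ℝ^d, 1). -/

import Mathlib

/-- A proper coloring of a hypergraph with edge set `E`: no edge is monochromatic. -/
def IsProperColoring {V : Type} {C : Type} (E : Set (Set V)) (φ : V → C) : Prop :=
  ∀ e ∈ E, ∃ x ∈ e, ∃ y ∈ e, φ x ≠ φ y

/-- The chromatic number of a hypergraph with vertex type `V` and edge set `E`. -/
noncomputable def chromNum {V : Type} (E : Set (Set V)) : Cardinal :=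
  sInf {c : Cardinal | ∃ (C : Type) (φ : V → C), Cardinal.mk C = c ∧ IsProperColoring E φ}

/-- Two hypergraphs on the same vertex set are equivalent if they have the same chromatic
number and, for color sets of exactly that cardinality, have the same proper colorings. -/
def EquivalentHypergraphs {V : Type} (E₁ E₂ : Set (Set V)) : Prop :=
  chromNum E₁ = chromNum E₂ ∧
    ∀ (C : Type) (φ : V → C), Cardinal.mk C = chromNum E₁ →
      (IsProperColoring E₁ φ ↔ IsProperColoring E₂ φ)

/-- Congruence in Euclidean `ℝ^d`: one set is the image of the other under an isometry
of Euclidean space. -/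
def EucCongruent {d : ℕ} (X Y : Set (EuclideanSpace ℝ (Fin d))) : Prop :=
  ∃ ρ : EuclideanSpace ℝ (Fin d) ≃ᵢ EuclideanSpace ℝ (Fin d), Y = ρ '' X

/-- The edge set of the hypergraph `H(M)` on `ℝ^d`: all congruent copies of members of `M`. -/
def congruenceEdges {d : ℕ} (M : Set (Set (EuclideanSpace ℝ (Fin d)))) :
    Set (Set (EuclideanSpace ℝ (Fin d))) :=
  {e | ∃ T ∈ M, EucCongruent T e}

/-- The edge set of the Euclidean unit distance graph `(ℝ^d, 1)`, viewed as a hypergraph. -/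
def unitDistEdges (d : ℕ) : Set (Set (EuclideanSpace ℝ (Fin d))) :=
  {e | ∃ x y : EuclideanSpace ℝ (Fin d), ‖x - y‖ = 1 ∧ e = {x, y}}


section AuxiliaryLemmas
open EuclideanGeometry

noncomputable def eV (d : ℕ) (hd : 0 < d) : EuclideanSpace ℝ (Fin d) :=
  EuclideanSpace.single ⟨0, hd⟩ (1:ℝ)

lemma eV_norm (d : ℕ) (hd : 0 < d) : ‖eV d hd‖ = 1 := by
  simp [eV, EuclideanSpace.norm_single]

lemma exists_iso (d : ℕ) (hd : 0 < d) (x y : EuclideanSpace ℝ (Fin d)) (h : ‖x - y‖ = 1) :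
    ∃ ρ : EuclideanSpace ℝ (Fin d) ≃ᵢ EuclideanSpace ℝ (Fin d), ρ 0 = x ∧ ρ (eV d hd) = y := by
  have h1 : ‖eV d hd‖ = ‖y - x‖ := by
    rw [eV_norm, ← neg_sub, norm_neg, h]
  set L := Submodule.reflection (ℝ ∙ (eV d hd - (y - x)))ᗮ with hL
  have hLe : L (eV d hd) = y - x := Submodule.reflection_sub h1
  refine ⟨L.toIsometryEquiv.trans (IsometryEquiv.addRight x), ?_, ?_⟩ <;>
    simp [IsometryEquiv.addRight_apply, hLe]


lemma dbe (d q : ℕ) [NeZero q]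
    (H : ∀ P : Finset (EuclideanSpace ℝ (Fin d)), ∃ ψ : EuclideanSpace ℝ (Fin d) → Fin q,
      ∀ p ∈ P, ∀ r ∈ P, ‖p - r‖ = 1 → ψ p ≠ ψ r) :
    ∃ φ : EuclideanSpace ℝ (Fin d) → Fin q, ∀ x y, ‖x - y‖ = 1 → φ x ≠ φ y := by
  classical
  let Z : Finset (EuclideanSpace ℝ (Fin d)) → Set (EuclideanSpace ℝ (Fin d) → Fin q) :=
    fun P => {φ | ∀ p ∈ P, ∀ r ∈ P, ‖p - r‖ = 1 → φ p ≠ φ r}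
  have hdir : Directed (· ⊇ ·) Z := by
    intro P Q
    refine ⟨P ∪ Q, fun φ hφ => ?_, fun φ hφ => ?_⟩ <;>
      exact fun p hp r hr h => hφ p (Finset.mem_union.2 (by tauto)) r (Finset.mem_union.2 (by tauto)) h
  have hne : ∀ P, (Z P).Nonempty := fun P => H P
  have hcl : ∀ P, IsClosed (Z P) := by
    intro P
    have : Z P = ⋂ (p ∈ P) (r ∈ P) (_ : ‖p - r‖ = 1), {φ : EuclideanSpace ℝ (Fin d) → Fin q | φ p ≠ φ r} := by
      ext φ; simp [Z]
    rw [this]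
    refine isClosed_iInter fun p => isClosed_iInter fun _ => isClosed_iInter fun r =>
      isClosed_iInter fun _ => isClosed_iInter fun _ => ?_
    have : {φ : EuclideanSpace ℝ (Fin d) → Fin q | φ p ≠ φ r} =
        (fun φ : EuclideanSpace ℝ (Fin d) → Fin q => (φ p, φ r)) ⁻¹' (Set.diagonal (Fin q))ᶜ := by
      ext φ; simp [Set.diagonal]
    rw [this]
    exact (IsClosed.preimage (by continuity) (isClosed_discrete _))
  have hcpt : ∀ P, IsCompact (Z P) := fun P => (hcl P).isCompact
  obtain ⟨φ, hφ⟩ := IsCompact.nonempty_iInter_of_directed_nonempty_isCompact_isClosed Z hdir hne hcpt hcl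
  refine ⟨φ, fun x y h => ?_⟩
  have := Set.mem_iInter.1 hφ {x, y}
  exact this x (by simp) y (by simp) h


lemma sum_sq_eq (d : ℕ) (x y : EuclideanSpace ℝ (Fin d)) (h : ‖x - y‖ = 1) :
    ∑ i, (x i - y i)^2 = 1 := by
  have := EuclideanSpace.norm_eq (x - y)
  rw [h] at this
  have hnn : 0 ≤ ∑ i, ‖(x - y) i‖ ^ 2 := Finset.sum_nonneg fun i _ => sq_nonneg _
  have h3 : (∑ i, ‖(x - y) i‖ ^ 2) = 1 := by nlinarith [Real.sq_sqrt hnn]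
  rw [← h3]
  refine Finset.sum_congr rfl fun i _ => ?_
  show _ = ‖x i - y i‖ ^ 2
  rw [Real.norm_eq_abs, sq_abs]

lemma cube_coloring (d : ℕ) :
    ∃ φ : EuclideanSpace ℝ (Fin d) → (Fin d → ZMod (d+2)),
      ∀ x y, ‖x - y‖ = 1 → φ x ≠ φ y := by
  classical
  refine ⟨fun x i => ((⌊x i * d⌋ : ℤ) : ZMod (d+2)), fun x y h heq => ?_⟩
  have hsum := sum_sq_eq d x y h
  rcases Nat.eq_zero_or_pos d with hd | hd
  · subst hd; simp at hsum
  have hdvd : ∀ i, ((d:ℤ)+2) ∣ (⌊x i * d⌋ - ⌊y i * d⌋) := by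
    intro i
    have h2 : ((⌊x i * d⌋ : ℤ) : ZMod (d+2)) = ((⌊y i * d⌋ : ℤ) : ZMod (d+2)) :=
      congrFun heq i
    rw [ZMod.intCast_eq_intCast_iff] at h2
    have h3 := Int.ModEq.dvd h2
    rw [show ((d:ℤ)+2) = ((d+2 : ℕ) : ℤ) by push_cast; ring]
    exact dvd_sub_comm.mp h3
  by_cases hfl : ∀ i, ⌊x i * d⌋ = ⌊y i * d⌋
  · have hterm : ∀ i : Fin d, (x i - y i)^2 < 1/(d:ℝ)^2 := by
      intro i
      have h1 : (⌊x i * d⌋ : ℝ) ≤ x i * d := Int.floor_le _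
      have h2 : x i * d < ⌊x i * d⌋ + 1 := Int.lt_floor_add_one _
      have h3 : (⌊y i * d⌋ : ℝ) ≤ y i * d := Int.floor_le _
      have h4 : y i * d < ⌊y i * d⌋ + 1 := Int.lt_floor_add_one _
      have h5 : (⌊x i * d⌋ : ℝ) = (⌊y i * d⌋ : ℝ) := by rw [hfl i]
      have hdpos : (0:ℝ) < d := by exact_mod_cast hd
      have h6 : |x i * d - y i * d| < 1 := by rw [abs_lt]; constructor <;> nlinarith
      have h8 : |x i - y i| < 1/d := by
        rw [lt_div_iff₀ hdpos, ← abs_of_pos hdpos, ← abs_mul, sub_mul]; exact h6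
      calc (x i - y i)^2 = |x i - y i|^2 := (sq_abs _).symm
        _ < (1/(d:ℝ))^2 := by
            apply sq_lt_sq' <;> nlinarith [abs_nonneg (x i - y i)]
        _ = 1/(d:ℝ)^2 := by rw [div_pow, one_pow]
    have : (1:ℝ) < 1 := by
      calc (1:ℝ) = ∑ i : Fin d, (x i - y i)^2 := hsum.symm
        _ < ∑ _i : Fin d, 1/(d:ℝ)^2 :=
            Finset.sum_lt_sum_of_nonempty (Finset.univ_nonempty_iff.2 (Fin.pos_iff_nonempty.1 hd))
              (fun i _ => hterm i)
        _ = d * (1/(d:ℝ)^2) := by rw [Finset.sum_const]; simp [mul_comm]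
        _ ≤ 1 := by
            have hdpos : (1:ℝ) ≤ d := by exact_mod_cast hd
            rw [mul_one_div, div_le_one (by positivity)]
            nlinarith
    linarith
  · push_neg at hfl
    obtain ⟨i, hi⟩ := hfl
    have hne : ⌊x i * d⌋ - ⌊y i * d⌋ ≠ 0 := sub_ne_zero.2 hi
    have hbig : (d:ℤ) + 2 ≤ |⌊x i * d⌋ - ⌊y i * d⌋| :=
      Int.le_of_dvd (abs_pos.2 hne) ((dvd_abs _ _).2 (hdvd i))
    have h1 : (⌊x i * d⌋ : ℝ) ≤ x i * d := Int.floor_le _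
    have h2 : x i * d < ⌊x i * d⌋ + 1 := Int.lt_floor_add_one _
    have h3 : (⌊y i * d⌋ : ℝ) ≤ y i * d := Int.floor_le _
    have h4 : y i * d < ⌊y i * d⌋ + 1 := Int.lt_floor_add_one _
    have hdpos : (0:ℝ) < d := by exact_mod_cast hd
    have hb : ((d:ℝ) + 1) < |x i * d - y i * d| := by
      rcases le_or_gt 0 (⌊x i * d⌋ - ⌊y i * d⌋ : ℤ) with hk | hk
      · have : (d:ℤ) + 2 ≤ ⌊x i * d⌋ - ⌊y i * d⌋ := by
          rwa [abs_of_nonneg hk] at hbig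
        have hr : ((d:ℝ) + 2) ≤ (⌊x i * d⌋ : ℝ) - (⌊y i * d⌋ : ℝ) := by exact_mod_cast this
        rw [lt_abs]; left; nlinarith
      · have : (d:ℤ) + 2 ≤ -(⌊x i * d⌋ - ⌊y i * d⌋) := by
          rwa [abs_of_neg hk] at hbig
        have hz : (d:ℤ) + 2 ≤ ⌊y i * d⌋ - ⌊x i * d⌋ := by linarith
        have hr : ((d:ℝ) + 2) ≤ (⌊y i * d⌋ : ℝ) - (⌊x i * d⌋ : ℝ) := by exact_mod_cast hz
        rw [lt_abs]; right; nlinarith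
    have hsq : 1 < (x i - y i)^2 := by
      have h7 : (d:ℝ) + 1 < |x i - y i| * d := by
        rwa [← sub_mul, abs_mul, abs_of_pos hdpos] at hb
      have h9 : 1 < |x i - y i| := by nlinarith [abs_nonneg (x i - y i)]
      calc (1:ℝ) = 1^2 := by norm_num
        _ < |x i - y i|^2 := by nlinarith
        _ = (x i - y i)^2 := sq_abs _
    have hle : (x i - y i)^2 ≤ ∑ j, (x j - y j)^2 :=
      Finset.single_le_sum (fun j _ => sq_nonneg (x j - y j)) (Finset.mem_univ i)
    rw [hsum] at hle
    linarith

lemma finite_claim (d n' m : ℕ) (hd : 0 < d) (hm : 2 ≤ m) (hn : 2 ≤ n')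
    (P₀ : Finset (EuclideanSpace ℝ (Fin d)))
    (hbad : ∀ ψ : EuclideanSpace ℝ (Fin d) → Fin (n' - 1),
      ∃ p ∈ P₀, ∃ q ∈ P₀, ‖p - q‖ = 1 ∧ ψ p = ψ q) :
    ∃ X₀ : Finset (EuclideanSpace ℝ (Fin d)),
      ∀ ψ : EuclideanSpace ℝ (Fin d) → Fin n', ψ 0 = ψ (eV d hd) →
        ∃ T : Finset (EuclideanSpace ℝ (Fin d)), T ⊆ X₀ ∧ T.card = m ∧
          (∃ p ∈ T, ∃ q ∈ T, ‖p - q‖ = 1) ∧ ∃ c, ∀ a ∈ T, ψ a = c := by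
  classical
  set e : EuclideanSpace ℝ (Fin d) := eV d hd with he
  have hene : ‖e‖ = 1 := eV_norm d hd
  have he0 : e ≠ 0 := by intro h; rw [h, norm_zero] at hene; norm_num at hene
  -- P₀ is nonempty
  have hP₀ne : P₀.Nonempty := by
    have h1 : 1 ≤ n' - 1 := by omega
    obtain ⟨p, hp, _⟩ := hbad (fun _ => ⟨0, by omega⟩)
    exact ⟨p, hp⟩
  -- bound on P₀
  set B : ℝ := (P₀.sup' hP₀ne fun z => ‖z‖) ⊔ 0 with hB
  have hB0 : 0 ≤ B := le_sup_right
  have hBle : ∀ z ∈ P₀, ‖z‖ ≤ B := fun z hz =>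
    le_trans (Finset.le_sup' (fun z => ‖z‖) hz) le_sup_left
  set R : ℝ := 2 * B + 2 with hR
  have hRpos : 0 < R := by positivity
  set M : ℕ := (n' + 1) * m with hM
  set t : ℕ → EuclideanSpace ℝ (Fin d) := fun i => (R * ((i:ℝ) + 1)) • e with ht
  have htnorm : ∀ i : ℕ, ‖t i‖ = R * ((i:ℝ) + 1) := by
    intro i
    rw [ht]
    simp only [norm_smul, hene, mul_one, Real.norm_eq_abs]
    rw [abs_of_pos (by positivity)]
  have fact1 : ∀ i j : ℕ, ∀ z ∈ P₀, ∀ w ∈ P₀, i ≠ j → z + t i ≠ w + t j := by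
    intro i j z hz w hw hij heqq
    have h1 : z - w = t j - t i := by
      have := heqq
      abel_nf
      linear_combination (norm := abel_nf) this
    have h2 : t j - t i = (R * ((j:ℝ) - i)) • e := by
      rw [ht]; rw [← sub_smul]; congr 1; ring
    have h3 : (1:ℝ) ≤ |(j:ℝ) - (i:ℝ)| := by
      have hzz : ((j:ℤ) - i) ≠ 0 := by omega
      have := Int.one_le_abs hzz
      calc (1:ℝ) ≤ |((j:ℤ) - i : ℤ)| := by exact_mod_cast this
        _ = |(j:ℝ) - (i:ℝ)| := by push_cast; ring_nf
    have h4 : R ≤ ‖t j - t i‖ := by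
      rw [h2, norm_smul, hene, mul_one, Real.norm_eq_abs, abs_mul, abs_of_pos hRpos]
      nlinarith
    have h5 : ‖z - w‖ ≤ 2 * B := by
      calc ‖z - w‖ ≤ ‖z‖ + ‖w‖ := norm_sub_le _ _
        _ ≤ B + B := add_le_add (hBle z hz) (hBle w hw)
        _ = 2 * B := by ring
    rw [h1] at h5
    linarith
  have fact2 : ∀ i : ℕ, ∀ z ∈ P₀, z + t i ≠ 0 ∧ z + t i ≠ e := by
    intro i z hz
    have h1 : R ≤ ‖t i‖ := by
      rw [htnorm]; nlinarith [Nat.cast_nonneg (α := ℝ) i]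
    constructor
    · intro h
      have : t i = -z := by linear_combination (norm := abel_nf) h
      rw [this, norm_neg] at h1
      have := hBle z hz; linarith
    · intro h
      have : t i = e - z := by linear_combination (norm := abel_nf) h
      rw [this] at h1
      have h2 : ‖e - z‖ ≤ 1 + B := by
        calc ‖e - z‖ ≤ ‖e‖ + ‖z‖ := norm_sub_le _ _
          _ ≤ 1 + B := by rw [hene]; exact add_le_add le_rfl (hBle z hz)
      have := hBle z hz; linarith
  set X₀ : Finset (EuclideanSpace ℝ (Fin d)) := insert 0 (insert e ((Finset.range M).biUnion fun i => P₀.image (· + t i)))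
    with hX₀
  have hmemX : ∀ i ∈ Finset.range M, ∀ z ∈ P₀, z + t i ∈ X₀ := by
    intro i hi z hz
    apply Finset.mem_insert_of_mem
    apply Finset.mem_insert_of_mem
    exact Finset.mem_biUnion.2 ⟨i, hi, Finset.mem_image_of_mem _ hz⟩
  refine ⟨X₀, fun ψ hψ0 => ?_⟩
  set c : Fin n' := ψ 0 with hc
  -- Step 1
  have step1 : ∀ i ∈ Finset.range M, (∃ z ∈ P₀, ψ (z + t i) = c) ∨
      (∃ p ∈ P₀, ∃ q ∈ P₀, ‖p - q‖ = 1 ∧ ψ (p + t i) = ψ (q + t i)) := by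
    intro i _
    by_contra hcon
    push_neg at hcon
    obtain ⟨h1, h2⟩ := hcon
    haveI : Nontrivial (Fin n') := ⟨⟨⟨0, by omega⟩, ⟨1, by omega⟩, by simp [Fin.ext_iff]⟩⟩
    obtain ⟨c₂, hc₂⟩ := exists_ne c
    have hcard : Fintype.card {c' : Fin n' // c' ≠ c} = n' - 1 := by
      rw [Fintype.card_subtype_compl, Fintype.card_fin, Fintype.card_subtype_eq]
    set equiv := Fintype.equivFinOfCardEq hcard with hequiv
    set χ' : EuclideanSpace ℝ (Fin d) → Fin (n' - 1) := fun z =>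
      equiv (if h : ψ (z + t i) = c then ⟨c₂, hc₂⟩ else ⟨ψ (z + t i), h⟩) with hχ'
    obtain ⟨p, hp, q, hq, hpq, hcol⟩ := hbad χ'
    have hinj := equiv.injective hcol
    rw [dif_neg (h1 p hp), dif_neg (h1 q hq)] at hinj
    exact h2 p hp q hq hpq (Subtype.ext_iff.1 hinj)
  set A : Finset ℕ := (Finset.range M).filter (fun i => ∃ z ∈ P₀, ψ (z + t i) = c) with hA
  have hAsub : A ⊆ Finset.range M := Finset.filter_subset _ _
  by_cases hAc : m ≤ A.card + 2
  · -- Case A: the color class of c is big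
    have hA' : ∀ i ∈ A, ∃ z, z ∈ P₀ ∧ ψ (z + t i) = c := by
      intro i hi
      obtain ⟨z, hz, hzc⟩ := (Finset.mem_filter.1 hi).2
      exact ⟨z, hz, hzc⟩
    choose! z hz1 hz2 using hA'
    set g : ℕ → EuclideanSpace ℝ (Fin d) := fun i => z i + t i with hg
    have hginj : Set.InjOn g ↑A := by
      intro i hi j hj hgij
      by_contra hij
      exact fact1 i j (z i) (hz1 i hi) (z j) (hz1 j hj) hij hgij
    have h0g : (0:EuclideanSpace ℝ (Fin d)) ∉ A.image g := by
      intro h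
      obtain ⟨i, hi, hgi⟩ := Finset.mem_image.1 h
      exact (fact2 i (z i) (hz1 i hi)).1 hgi
    have heg : e ∉ A.image g := by
      intro h
      obtain ⟨i, hi, hgi⟩ := Finset.mem_image.1 h
      exact (fact2 i (z i) (hz1 i hi)).2 hgi
    set Y : Finset (EuclideanSpace ℝ (Fin d)) := insert 0 (insert e (A.image g)) with hY
    have hYcard : Y.card = A.card + 2 := by
      rw [hY, Finset.card_insert_of_notMem, Finset.card_insert_of_notMem heg,
        Finset.card_image_of_injOn hginj]
      simp only [Finset.mem_insert]
      push_neg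
      exact ⟨fun h => he0 h.symm, h0g⟩
    have hYX : Y ⊆ X₀ := by
      intro a ha
      rw [hY] at ha
      rcases Finset.mem_insert.1 ha with h | h
      · rw [h, hX₀]; exact Finset.mem_insert_self _ _
      rcases Finset.mem_insert.1 h with h | h
      · rw [h, hX₀]; exact Finset.mem_insert_of_mem (Finset.mem_insert_self _ _)
      obtain ⟨i, hi, hgi⟩ := Finset.mem_image.1 h
      rw [← hgi]
      exact hmemX i (hAsub hi) (z i) (hz1 i hi)
    have hYmono : ∀ a ∈ Y, ψ a = c := by
      intro a ha
      rw [hY] at ha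
      rcases Finset.mem_insert.1 ha with h | h
      · rw [h, hc]
      rcases Finset.mem_insert.1 h with h | h
      · rw [h, ← hψ0, hc]
      obtain ⟨i, hi, hgi⟩ := Finset.mem_image.1 h
      rw [← hgi]
      exact hz2 i hi
    have hpair : ({0, e} : Finset (EuclideanSpace ℝ (Fin d))) ⊆ Y := by
      intro a ha
      rcases Finset.mem_insert.1 ha with h | h
      · rw [h]; exact Finset.mem_insert_self _ _
      · simp only [Finset.mem_singleton] at h
        rw [h]; exact Finset.mem_insert_of_mem (Finset.mem_insert_self _ _)
    have hpcard : ({0, e} : Finset (EuclideanSpace ℝ (Fin d))).card = 2 := by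
      rw [Finset.card_insert_of_notMem (by simpa using fun h => he0 h.symm),
        Finset.card_singleton]
    obtain ⟨T, hsT, hTY, hTcard⟩ :=
      Finset.exists_subsuperset_card_eq (n := m) hpair (by omega) (by omega)
    refine ⟨T, hTY.trans hYX, hTcard, ⟨0, hsT (by simp), e, hsT (by simp), ?_⟩,
      c, fun a ha => hYmono a (hTY ha)⟩
    rw [zero_sub, norm_neg, hene]
  · -- Case B: many copies with internal monochromatic unit pairs
    set Bs : Finset ℕ := Finset.range M \ A with hBs
    have hBs' : ∀ i ∈ Bs, ∃ p, p ∈ P₀ ∧ ∃ q, q ∈ P₀ ∧ ‖p - q‖ = 1 ∧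
        ψ (p + t i) = ψ (q + t i) := by
      intro i hi
      rw [hBs, Finset.mem_sdiff] at hi
      rcases step1 i hi.1 with h | h
      · exact absurd (Finset.mem_filter.2 ⟨hi.1, h⟩) hi.2
      · obtain ⟨p, hp, q, hq, h1, h2⟩ := h
        exact ⟨p, hp, q, hq, h1, h2⟩
    choose! p hp q hq hpq hcol using hBs'
    have hBscard : Bs.card = M - A.card := by
      rw [hBs, Finset.card_sdiff_of_subset hAsub, Finset.card_range]
    have hmul : n' * m = n' * (m - 1) + n' := by
      conv_lhs => rw [show m = (m - 1) + 1 by omega]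
      rw [Nat.mul_succ]
    have hlt : (Finset.univ : Finset (Fin n')).card * (m - 1) < Bs.card := by
      rw [Finset.card_univ, Fintype.card_fin, hBscard, hM]
      have : (n' + 1) * m = n' * m + m := by ring
      omega
    obtain ⟨c', -, hc'⟩ := Finset.exists_lt_card_fiber_of_mul_lt_card_of_maps_to
      (f := fun i => ψ (p i + t i)) (fun i _ => Finset.mem_univ _) hlt
    set B' : Finset ℕ := Bs.filter (fun i => ψ (p i + t i) = c') with hB'
    have hB'sub : B' ⊆ Bs := Finset.filter_subset _ _
    have hB'card : m ≤ B'.card := by omega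
    set u : ℕ → EuclideanSpace ℝ (Fin d) := fun i => p i + t i with hu
    set v : ℕ → EuclideanSpace ℝ (Fin d) := fun i => q i + t i with hv
    set Y : Finset (EuclideanSpace ℝ (Fin d)) := B'.image u ∪ B'.image v with hY
    have huinj : Set.InjOn u ↑B' := by
      intro i hi j hj huij
      by_contra hij
      exact fact1 i j (p i) (hp i (hB'sub hi)) (p j) (hp j (hB'sub hj)) hij huij
    have hYmono : ∀ a ∈ Y, ψ a = c' := by
      intro a ha
      rcases Finset.mem_union.1 ha with h | h
      · obtain ⟨i, hi, hui⟩ := Finset.mem_image.1 h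
        rw [← hui]
        exact (Finset.mem_filter.1 hi).2
      · obtain ⟨i, hi, hvi⟩ := Finset.mem_image.1 h
        rw [← hvi, hv]
        rw [← hcol i (hB'sub hi)]
        exact (Finset.mem_filter.1 hi).2
    have hYcard : m ≤ Y.card := by
      calc m ≤ B'.card := hB'card
        _ = (B'.image u).card := (Finset.card_image_of_injOn huinj).symm
        _ ≤ Y.card := Finset.card_le_card (Finset.subset_union_left)
    have hB'ne : B'.Nonempty := Finset.card_pos.1 (by omega)
    obtain ⟨i₀, hi₀⟩ := hB'ne
    have huv : ‖u i₀ - v i₀‖ = 1 := by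
      rw [hu, hv]
      have : p i₀ + t i₀ - (q i₀ + t i₀) = p i₀ - q i₀ := by abel
      rw [this]
      exact hpq i₀ (hB'sub hi₀)
    have huvne : u i₀ ≠ v i₀ := by
      intro h; rw [h, sub_self, norm_zero] at huv; norm_num at huv
    have hpairY : ({u i₀, v i₀} : Finset (EuclideanSpace ℝ (Fin d))) ⊆ Y := by
      intro a ha
      rcases Finset.mem_insert.1 ha with h | h
      · rw [h]; exact Finset.mem_union_left _ (Finset.mem_image_of_mem _ hi₀)
      · simp only [Finset.mem_singleton] at h
        rw [h]; exact Finset.mem_union_right _ (Finset.mem_image_of_mem _ hi₀)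
    have hpcard : ({u i₀, v i₀} : Finset (EuclideanSpace ℝ (Fin d))).card = 2 := by
      rw [Finset.card_insert_of_notMem (by simpa using huvne), Finset.card_singleton]
    obtain ⟨T, hsT, hTY, hTcard⟩ :=
      Finset.exists_subsuperset_card_eq (n := m) hpairY (by omega) (by omega)
    have hYX : Y ⊆ X₀ := by
      intro a ha
      rcases Finset.mem_union.1 ha with h | h
      · obtain ⟨i, hi, hui⟩ := Finset.mem_image.1 h
        rw [← hui]
        exact hmemX i (Finset.mem_sdiff.1 (hBs ▸ hB'sub hi)).1 (p i) (hp i (hB'sub hi))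
      · obtain ⟨i, hi, hvi⟩ := Finset.mem_image.1 h
        rw [← hvi]
        exact hmemX i (Finset.mem_sdiff.1 (hBs ▸ hB'sub hi)).1 (q i) (hq i (hB'sub hi))
    refine ⟨T, hTY.trans hYX, hTcard,
      ⟨u i₀, hsT (by simp), v i₀, hsT (by simp [Finset.mem_insert]), huv⟩,
      c', fun a ha => hYmono a (hTY ha)⟩

lemma mem_unitDistEdges {d : ℕ} {x y : EuclideanSpace ℝ (Fin d)} (h : ‖x - y‖ = 1) :
    ({x, y} : Set (EuclideanSpace ℝ (Fin d))) ∈ unitDistEdges d := ⟨x, y, h, rfl⟩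

/-- Graph-proper colorings avoid monochromatic unit pairs. -/
lemma proper_unit_ne {d : ℕ} {C : Type} {φ : EuclideanSpace ℝ (Fin d) → C}
    (hφ : IsProperColoring (unitDistEdges d) φ) {x y : EuclideanSpace ℝ (Fin d)}
    (h : ‖x - y‖ = 1) : φ x ≠ φ y := by
  obtain ⟨a, ha, b, hb, hab⟩ := hφ _ (mem_unitDistEdges h)
  rcases ha with rfl | ha <;> rcases hb with rfl | hb
  · exact absurd rfl hab
  · rw [Set.mem_singleton_iff] at hb; subst hb; exact hab
  · rw [Set.mem_singleton_iff] at ha; subst ha; exact fun h' => hab h'.symm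
  · rw [Set.mem_singleton_iff] at ha hb; subst ha; subst hb; exact absurd rfl hab

/-- KEY2: graph-proper implies H(S)-proper, provided each member of S contains a unit pair. -/
lemma key2 {d : ℕ} {S : Set (Set (EuclideanSpace ℝ (Fin d)))}
    (hS : ∀ T ∈ S, ∃ p ∈ T, ∃ q ∈ T, ‖p - q‖ = 1) {C : Type}
    {φ : EuclideanSpace ℝ (Fin d) → C} (hφ : IsProperColoring (unitDistEdges d) φ) :
    IsProperColoring (congruenceEdges S) φ := by
  rintro e ⟨T, hTS, ρ, rfl⟩
  obtain ⟨p, hp, q, hq, hpq⟩ := hS T hTS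
  have hd : ‖ρ p - ρ q‖ = 1 := by
    rw [← dist_eq_norm, ρ.dist_eq, dist_eq_norm, hpq]
  exact ⟨ρ p, Set.mem_image_of_mem _ hp, ρ q, Set.mem_image_of_mem _ hq, proper_unit_ne hφ hd⟩


end AuxiliaryLemmas

/-- Corollary 3.1.1: for every `m ≥ 2` there is a finite set `S` of unit `m`-gons in
Euclidean `ℝ^d` such that `H(S)` is equivalent to the Euclidean unit distance graph. -/
theorem exists_unit_mgon_hypergraph_equivalent_to_unit_distance_graph (d m : ℕ) (hm : 2 ≤ m) :
    ∃ S : Set (Set (EuclideanSpace ℝ (Fin d))),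
      S.Finite ∧
        (∀ T ∈ S, T.ncard = m ∧ ∃ x ∈ T, ∃ y ∈ T, ‖x - y‖ = 1) ∧
        EquivalentHypergraphs (congruenceEdges S) (unitDistEdges d) := by
  classical
  rcases Nat.eq_zero_or_pos d with hd | hd
  · subst hd
    refine ⟨∅, Set.finite_empty, by simp, ?_⟩
    have h1 : congruenceEdges (∅ : Set (Set (EuclideanSpace ℝ (Fin 0)))) = unitDistEdges 0 := by
      ext e
      simp only [congruenceEdges, unitDistEdges, Set.mem_setOf_eq, Set.mem_empty_iff_false,
        false_and, exists_false, false_iff]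
      rintro ⟨x, y, h1, -⟩
      have : ‖x - y‖ = 0 := by
        rw [EuclideanSpace.norm_eq]
        simp
      rw [this] at h1; norm_num at h1
    rw [h1]
    exact ⟨rfl, fun _ _ _ => Iff.rfl⟩
  -- d ≥ 1
  set E₂ := unitDistEdges d
  set Sach₂ := {c : Cardinal | ∃ (C : Type) (φ : EuclideanSpace ℝ (Fin d) → C),
    Cardinal.mk C = c ∧ IsProperColoring E₂ φ} with hSach₂
  obtain ⟨φ₀, hφ₀⟩ := cube_coloring d
  have hφ₀p : IsProperColoring E₂ φ₀ := by
    rintro e ⟨x, y, hxy, rfl⟩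
    exact ⟨x, by simp, y, by simp, hφ₀ x y hxy⟩
  have hach_ne : Sach₂.Nonempty := ⟨_, _, φ₀, rfl, hφ₀p⟩
  have hchrom2 : chromNum E₂ = sInf Sach₂ := rfl
  have hlt : chromNum E₂ < Cardinal.aleph0 := by
    calc chromNum E₂ ≤ Cardinal.mk (Fin d → ZMod (d+2)) :=
          csInf_le (OrderBot.bddBelow _) ⟨_, φ₀, rfl, hφ₀p⟩
      _ < Cardinal.aleph0 := by
          rw [Cardinal.mk_fintype]; exact Cardinal.nat_lt_aleph0 _
  obtain ⟨n', hn'⟩ := Cardinal.lt_aleph0.1 hlt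
  have htwo : (2 : Cardinal) ≤ chromNum E₂ := by
    apply le_csInf hach_ne
    rintro c ⟨C, φ, rfl, hφ⟩
    have := proper_unit_ne hφ (x := 0) (y := eV d hd) (by rw [zero_sub, norm_neg, eV_norm])
    rw [Cardinal.two_le_iff]
    exact ⟨_, _, this⟩
  have hn2 : 2 ≤ n' := by
    rw [hn'] at htwo; exact_mod_cast htwo
  haveI : NeZero (n' - 1) := ⟨by omega⟩
  -- de Bruijn–Erdős: a finite (n'-1)-chromatic-critical configuration
  have hbadP : ∃ P₀ : Finset (EuclideanSpace ℝ (Fin d)),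
      ∀ ψ : EuclideanSpace ℝ (Fin d) → Fin (n' - 1),
        ∃ p ∈ P₀, ∃ q ∈ P₀, ‖p - q‖ = 1 ∧ ψ p = ψ q := by
    by_contra hcon
    push_neg at hcon
    have hH : ∀ P : Finset (EuclideanSpace ℝ (Fin d)),
        ∃ ψ : EuclideanSpace ℝ (Fin d) → Fin (n' - 1),
          ∀ p ∈ P, ∀ r ∈ P, ‖p - r‖ = 1 → ψ p ≠ ψ r := by
      intro P
      obtain ⟨ψ, hψ⟩ := hcon P
      exact ⟨ψ, hψ⟩
    obtain ⟨φ, hφ⟩ := dbe d (n' - 1) hH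
    have hmem : (↑(n' - 1) : Cardinal) ∈ Sach₂ := by
      refine ⟨Fin (n' - 1), φ, by simp, ?_⟩
      rintro e ⟨x, y, hxy, rfl⟩
      exact ⟨x, by simp, y, by simp, hφ x y hxy⟩
    have := csInf_le (OrderBot.bddBelow _) hmem
    rw [← hchrom2, hn'] at this
    have : n' ≤ n' - 1 := by exact_mod_cast this
    omega
  obtain ⟨P₀, hbad⟩ := hbadP
  obtain ⟨X₀, hX₀⟩ := finite_claim d n' m hd hm hn2 P₀ hbad
  -- The finite family of shapes
  set S : Set (Set (EuclideanSpace ℝ (Fin d))) :=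
    {T | T ⊆ ↑X₀ ∧ T.ncard = m ∧ ∃ p ∈ T, ∃ q ∈ T, ‖p - q‖ = 1} with hS
  have hSfin : S.Finite := Set.Finite.subset X₀.finite_toSet.finite_subsets
    (fun T hT => hT.1)
  have hSgood : ∀ T ∈ S, T.ncard = m ∧ ∃ x ∈ T, ∃ y ∈ T, ‖x - y‖ = 1 :=
    fun T hT => ⟨hT.2.1, hT.2.2⟩
  have hSpair : ∀ T ∈ S, ∃ p ∈ T, ∃ q ∈ T, ‖p - q‖ = 1 := fun T hT => hT.2.2
  -- KEY: with at most n' colors, H(S)-proper implies graph-proper (Fin n' version)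
  have keyF : ∀ φF : EuclideanSpace ℝ (Fin d) → Fin n',
      IsProperColoring (congruenceEdges S) φF → IsProperColoring E₂ φF := by
    intro φF hpr e he
    obtain ⟨x, y, hxy, rfl⟩ := he
    by_contra hcon
    push_neg at hcon
    have hxyeq : φF x = φF y := hcon x (by simp) y (by simp)
    obtain ⟨ρ, hρ0, hρe⟩ := exists_iso d hd x y hxy
    set ψ : EuclideanSpace ℝ (Fin d) → Fin n' := fun z => φF (ρ z) with hψdef
    have hψ0 : ψ 0 = ψ (eV d hd) := by rw [hψdef]; simp only [hρ0, hρe]; exact hxyeq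
    obtain ⟨T, hTX, hTcard, hTpair, c'', hTmono⟩ := hX₀ ψ hψ0
    have hTS : (↑T : Set (EuclideanSpace ℝ (Fin d))) ∈ S := by
      refine ⟨by exact_mod_cast hTX, by rw [Set.ncard_coe_finset, hTcard], ?_⟩
      obtain ⟨p, hp, q, hq, hpq⟩ := hTpair
      exact ⟨p, by exact_mod_cast hp, q, by exact_mod_cast hq, hpq⟩
    have hedge : ρ '' ↑T ∈ congruenceEdges S := ⟨↑T, hTS, ρ, rfl⟩
    obtain ⟨a, ha, b, hb, hab⟩ := hpr _ hedge
    obtain ⟨a', ha', rfl⟩ := ha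
    obtain ⟨b', hb', rfl⟩ := hb
    apply hab
    have h1 : ψ a' = c'' := hTmono a' (by exact_mod_cast ha')
    have h2 : ψ b' = c'' := hTmono b' (by exact_mod_cast hb')
    rw [hψdef] at h1 h2
    simp only at h1 h2
    rw [h1, h2]
  have key : ∀ (C : Type) (φ : EuclideanSpace ℝ (Fin d) → C), Cardinal.mk C ≤ ↑n' →
      IsProperColoring (congruenceEdges S) φ → IsProperColoring E₂ φ := by
    intro C φ hmk hpr
    have : Cardinal.mk C ≤ Cardinal.mk (Fin n') := by rwa [Cardinal.mk_fin]
    obtain ⟨ι⟩ := (Cardinal.le_def C (Fin n')).1 this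
    have hprF : IsProperColoring (congruenceEdges S) (fun z => ι (φ z)) := by
      intro e he
      obtain ⟨a, ha, b, hb, hab⟩ := hpr e he
      exact ⟨a, ha, b, hb, fun h => hab (ι.injective h)⟩
    have hgF := keyF _ hprF
    intro e he
    obtain ⟨a, ha, b, hb, hab⟩ := hgF e he
    exact ⟨a, ha, b, hb, fun h => hab (congrArg ι h)⟩
  -- chromatic number of H(S) equals n'
  have hchrom2n : chromNum E₂ = (n' : Cardinal) := hn'
  obtain ⟨Cn, φn, hmkn, hpropn⟩ : (n' : Cardinal) ∈ Sach₂ := by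
    rw [← hn', hchrom2]
    exact csInf_mem hach_ne
  have hchrom1 : chromNum (congruenceEdges S) = (n' : Cardinal) := by
    apply le_antisymm
    · exact csInf_le (OrderBot.bddBelow _) ⟨Cn, φn, hmkn, key2 hSpair hpropn⟩
    · refine le_csInf ⟨(n' : Cardinal), ⟨Cn, φn, hmkn, key2 hSpair hpropn⟩⟩ ?_
      rintro c ⟨C, φ, rfl, hpr⟩
      rcases le_or_gt (↑n' : Cardinal) (Cardinal.mk C) with h | h
      · exact h
      · have hg := key C φ (le_of_lt h) hpr
        have : chromNum E₂ ≤ Cardinal.mk C := csInf_le (OrderBot.bddBelow _) ⟨C, φ, rfl, hg⟩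
        rw [hchrom2n] at this
        exact absurd h (not_lt.2 this)
  refine ⟨S, hSfin, hSgood, hchrom1.trans hchrom2n.symm, ?_⟩
  intro C φ hmkC
  rw [hchrom1] at hmkC
  exact ⟨key C φ (le_of_eq hmkC) , fun h => key2 hSpair h⟩
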